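/- arXiv:1910.04831 — 4 statements merged into one kernel-verified Lean document; each statement's English description precedes it below -/
import Mathlib

section
/- For any matrix X ∈ ℝ^{m×n}, the nuclear norm of X equals the minimum over all factorizations X = U V with U ∈ ℝ^{m×r}, V ∈ ℝ^{r×n} (for r at least the rank of X) of (1/2)(‖U‖_F² + ‖V‖_F²). -/
open Matrix

noncomputable def frobInner {ι κ : Type*} [Fintype ι] [Fintype κ]
    (A B : Matrix ι κ ℝ) : ℝ := (Aᵀ * B).trace

noncomputable def frobNorm {ι κ : Type*} [Fintype ι] [Fintype κ]
    (A : Matrix ι κ ℝ) : ℝ := Real.sqrt (∑ i, ∑ j, (A i j) ^ 2)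

noncomputable def nuclearNorm {m n : ℕ} (X : Matrix (Fin m) (Fin n) ℝ) : ℝ :=
  ∑ i : Fin n, Real.sqrt ((Matrix.isHermitian_conjTranspose_mul_self X).eigenvalues i)

noncomputable def specNorm {m n : ℕ} (X : Matrix (Fin m) (Fin n) ℝ) : ℝ :=
  ⨆ i : Fin n, Real.sqrt ((Matrix.isHermitian_conjTranspose_mul_self X).eigenvalues i)

private lemma dot_le_half {r : ℕ} (a b : Fin r → ℝ) :
    ∑ k, a k * b k ≤ (∑ k, a k ^ 2) / 2 + (∑ k, b k ^ 2) / 2 := by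
  have h : 0 ≤ ∑ k, (a k - b k) ^ 2 := Finset.sum_nonneg fun k _ => sq_nonneg _
  have e : ∑ k, (a k - b k) ^ 2 = ∑ k, a k ^ 2 - 2 * ∑ k, a k * b k + ∑ k, b k ^ 2 := by
    simp only [sub_sq, Finset.sum_add_distrib, Finset.sum_sub_distrib, Finset.mul_sum]
    ring_nf
  linarith [e ▸ h]

open scoped MatrixOrder in
private lemma trace_psd_mul_nonneg {k : ℕ} {A B : Matrix (Fin k) (Fin k) ℝ}
    (hA : A.PosSemidef) (hB : B.PosSemidef) : 0 ≤ (A * B).trace := by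
  have h : A * B = CFC.sqrt A * (CFC.sqrt A * CFC.sqrt B * CFC.sqrt B) := by
    rw [← mul_assoc, ← mul_assoc, CFC.sqrt_mul_sqrt_self A hA.nonneg, mul_assoc,
      CFC.sqrt_mul_sqrt_self B hB.nonneg]
  rw [h, trace_mul_comm (CFC.sqrt A)]
  have hC : CFC.sqrt A * CFC.sqrt B * CFC.sqrt B * CFC.sqrt A
      = (CFC.sqrt B * CFC.sqrt A)ᴴ * (CFC.sqrt B * CFC.sqrt A) := by
    rw [conjTranspose_mul, (CFC.sqrt_nonneg A).posSemidef.1, (CFC.sqrt_nonneg B).posSemidef.1]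
    noncomm_ring
  rw [hC, trace]
  refine Finset.sum_nonneg fun i _ => ?_
  simp only [diag_apply, mul_apply, conjTranspose_apply]
  exact Finset.sum_nonneg fun j _ => by simpa using mul_self_nonneg _

private lemma frobNorm_sq {ι κ : Type*} [Fintype ι] [Fintype κ] (A : Matrix ι κ ℝ) :
    frobNorm A ^ 2 = ∑ i, ∑ j, A i j ^ 2 :=
  Real.sq_sqrt (Finset.sum_nonneg fun _ _ => Finset.sum_nonneg fun _ _ => sq_nonneg _)

private lemma sum_sq_eq_trace {ι κ : Type*} [Fintype ι] [Fintype κ] (A : Matrix ι κ ℝ) :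
    ∑ i, ∑ j, A i j ^ 2 = (Aᴴ * A).trace := by
  simp only [trace, diag_apply, mul_apply, conjTranspose_apply, star_trivial, ← sq]
  exact Finset.sum_comm

theorem nuclearNorm_eq_min_factorization {m n : ℕ} (X : Matrix (Fin m) (Fin n) ℝ) :
    IsLeast {c : ℝ | ∃ (r : ℕ) (U : Matrix (Fin m) (Fin r) ℝ) (V : Matrix (Fin r) (Fin n) ℝ),
        X.rank ≤ r ∧ X = U * V ∧ c = (1 / 2) * (frobNorm U ^ 2 + frobNorm V ^ 2)}
      (nuclearNorm X) := by
  classical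
  have hH := Matrix.isHermitian_conjTranspose_mul_self X
  set lam : Fin n → ℝ := hH.eigenvalues with hlamdef
  have lam_nonneg : ∀ i, 0 ≤ lam i :=
    (Matrix.posSemidef_conjTranspose_mul_self X).eigenvalues_nonneg
  set W : Matrix (Fin n) (Fin n) ℝ := (hH.eigenvectorUnitary : Matrix (Fin n) (Fin n) ℝ)
    with hWdef
  have hW1 : Wᴴ * W = 1 := by
    rw [hWdef, ← star_eq_conjTranspose]
    exact (Matrix.mem_unitaryGroup_iff').mp hH.eigenvectorUnitary.2
  have hW2 : W * Wᴴ = 1 := by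
    rw [hWdef, ← star_eq_conjTranspose]
    exact (Matrix.mem_unitaryGroup_iff).mp hH.eigenvectorUnitary.2
  have key : (X * W)ᴴ * (X * W) = diagonal lam := by
    have h := hH.conjStarAlgAut_star_eigenvectorUnitary
    rw [Unitary.conjStarAlgAut_star_apply,
      RCLike.ofReal_real_eq_id, Function.id_comp, star_eq_conjTranspose, ← hWdef,
      ← hlamdef] at h
    calc (X * W)ᴴ * (X * W) = Wᴴ * (Xᴴ * X) * W := by
          simp only [conjTranspose_mul, Matrix.mul_assoc]
      _ = diagonal lam := h
  set M : Matrix (Fin m) (Fin n) ℝ := X * W with hMdef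
  have keyentry : ∀ i i', ∑ j, M j i * M j i' = diagonal lam i i' := by
    intro i i'
    have hk := congrFun (congrFun key i) i'
    simpa only [mul_apply, conjTranspose_apply, star_trivial] using hk
  have col_sq : ∀ i, ∑ j, M j i * M j i = lam i := by
    intro i
    have hk := keyentry i i
    rwa [diagonal_apply_eq] at hk
  have col_zero : ∀ i, lam i = 0 → ∀ j, M j i = 0 := by
    intro i h0 j
    have h := col_sq i
    rw [h0] at h
    have := (Finset.sum_eq_zero_iff_of_nonneg
      (fun j _ => mul_self_nonneg (M j i))).mp h j (Finset.mem_univ j)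
    exact (mul_self_eq_zero).mp this
  have nuc : nuclearNorm X = ∑ i, Real.sqrt (lam i) := rfl
  constructor
  · -- membership
    set f : Fin n → ℝ := fun i => Real.sqrt (Real.sqrt (lam i)) with hf
    set U₀ : Matrix (Fin m) (Fin n) ℝ := M * diagonal (fun i => (f i)⁻¹) with hU0
    set V₀ : Matrix (Fin n) (Fin n) ℝ := diagonal f * Wᴴ with hV0
    refine ⟨n, U₀, V₀, Matrix.rank_le_width X, ?_, ?_⟩
    · -- factorization
      have h1 : U₀ * V₀ = M * diagonal (fun i => (f i)⁻¹ * f i) * Wᴴ := by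
        rw [hU0, hV0, ← diagonal_mul_diagonal]
        simp only [Matrix.mul_assoc]
      have h2 : M * diagonal (fun i => (f i)⁻¹ * f i) = M := by
        ext j i
        rw [mul_diagonal]
        by_cases h0 : lam i = 0
        · rw [col_zero i h0 j]; ring
        · have hl : 0 < lam i := lt_of_le_of_ne (lam_nonneg i) (Ne.symm h0)
          have hfpos : f i ≠ 0 := by
            have : 0 < f i := by rw [hf]; positivity
            exact ne_of_gt this
          rw [inv_mul_cancel₀ hfpos, mul_one]
      rw [h1, h2, hMdef, Matrix.mul_assoc, hW2, Matrix.mul_one]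
    · -- value
      have hV : frobNorm V₀ ^ 2 = ∑ i, Real.sqrt (lam i) := by
        rw [frobNorm_sq]
        have hent : ∀ i j, V₀ i j = f i * W j i := by
          intro i j
          simp [hV0, diagonal_mul, conjTranspose_apply]
        calc ∑ i, ∑ j, V₀ i j ^ 2 = ∑ i, f i ^ 2 * ∑ j, W j i * W j i := by
              refine Finset.sum_congr rfl fun i _ => ?_
              rw [Finset.mul_sum]
              refine Finset.sum_congr rfl fun j _ => ?_
              rw [hent]; ring
          _ = ∑ i, Real.sqrt (lam i) := by
              refine Finset.sum_congr rfl fun i _ => ?_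
              have hWi : ∑ j, W j i * W j i = 1 := by
                have hk := congrFun (congrFun hW1 i) i
                simpa [mul_apply, conjTranspose_apply] using hk
              rw [hWi, mul_one, hf, Real.sq_sqrt (Real.sqrt_nonneg _)]
      have hU : frobNorm U₀ ^ 2 = ∑ i, Real.sqrt (lam i) := by
        rw [frobNorm_sq]
        have hent : ∀ j i, U₀ j i = M j i * (f i)⁻¹ := by
          intro j i
          simp [hU0, mul_diagonal]
        calc ∑ j, ∑ i, U₀ j i ^ 2 = ∑ i, ∑ j, U₀ j i ^ 2 := Finset.sum_comm
          _ = ∑ i, ((f i)⁻¹) ^ 2 * ∑ j, M j i * M j i := by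
              refine Finset.sum_congr rfl fun i _ => ?_
              rw [Finset.mul_sum]
              refine Finset.sum_congr rfl fun j _ => ?_
              rw [hent]; ring
          _ = ∑ i, Real.sqrt (lam i) := by
              refine Finset.sum_congr rfl fun i _ => ?_
              rw [col_sq]
              by_cases h0 : lam i = 0
              · simp [h0, hf]
              · have hl : 0 < lam i := lt_of_le_of_ne (lam_nonneg i) (Ne.symm h0)
                have h2 : ((f i)⁻¹) ^ 2 = (Real.sqrt (lam i))⁻¹ := by
                  rw [inv_pow, hf, Real.sq_sqrt (Real.sqrt_nonneg _)]
                have hs : Real.sqrt (lam i) ≠ 0 := by positivity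
                rw [h2]
                rw [inv_mul_eq_div, div_eq_iff hs]
                exact (Real.mul_self_sqrt (le_of_lt hl)).symm
      rw [nuc, hU, hV]; ring
  · -- lower bound
    rintro c ⟨r, U, V, hr, hXUV, rfl⟩
    set P : Matrix (Fin m) (Fin n) ℝ :=
      Matrix.of (fun j i => (Real.sqrt (lam i))⁻¹ * M j i) with hP
    have hPapp : ∀ j i, P j i = (Real.sqrt (lam i))⁻¹ * M j i := fun _ _ => rfl
    have hPP : Pᴴ * P = diagonal (fun i => if lam i = 0 then (0:ℝ) else 1) := by
      ext i i'
      rw [mul_apply]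
      simp only [conjTranspose_apply, star_trivial]
      have e : ∑ j, P j i * P j i'
          = (Real.sqrt (lam i))⁻¹ * (Real.sqrt (lam i'))⁻¹ * ∑ j, M j i * M j i' := by
        rw [Finset.mul_sum]
        refine Finset.sum_congr rfl fun j _ => ?_
        rw [hPapp, hPapp]; ring
      rw [e, keyentry i i']
      by_cases h : i = i'
      · subst h
        rw [diagonal_apply_eq, diagonal_apply_eq]
        by_cases h0 : lam i = 0
        · simp [h0]
        · have hl : 0 < lam i := lt_of_le_of_ne (lam_nonneg i) (Ne.symm h0)
          rw [if_neg h0]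
          have hs : Real.sqrt (lam i) ≠ 0 := by positivity
          field_simp
          rw [Real.sq_sqrt (le_of_lt hl)]
      · rw [diagonal_apply_ne _ h, diagonal_apply_ne _ h, mul_zero]
    have hPd : P * diagonal (fun i => if lam i = 0 then (0:ℝ) else 1) = P := by
      ext j i
      rw [mul_diagonal]
      by_cases h0 : lam i = 0
      · rw [if_pos h0, hPapp, col_zero i h0 j]; ring
      · rw [if_neg h0, mul_one]
    have hM : (P * Pᴴ) * (P * Pᴴ) = P * Pᴴ := by
      calc (P * Pᴴ) * (P * Pᴴ) = P * (Pᴴ * P) * Pᴴ := by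
            simp only [Matrix.mul_assoc]
        _ = P * Pᴴ := by rw [hPP, hPd]
    have hproj : (1 - P * Pᴴ).PosSemidef := by
      have h1 : (1 - P * Pᴴ)ᴴ = 1 - P * Pᴴ := by
        simp [conjTranspose_sub, conjTranspose_mul]
      have h2 : 1 - P * Pᴴ = (1 - P * Pᴴ)ᴴ * (1 - P * Pᴴ) := by
        rw [h1, sub_mul, one_mul, mul_sub, mul_one, hM]; abel
      rw [h2]
      exact posSemidef_conjTranspose_mul_self _
    -- pointwise bound
    have hsig : ∀ i, Real.sqrt (lam i)
        ≤ (∑ k, (Uᴴ * P) k i ^ 2) / 2 + (∑ k, (V * W) k i ^ 2) / 2 := by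
      intro i
      have heq : Real.sqrt (lam i) = ∑ k, (Uᴴ * P) k i * (V * W) k i := by
        have h0t : (Uᴴ * P)ᵀ = Pᴴ * U := by
          rw [transpose_mul, ← conjTranspose_eq_transpose_of_trivial P,
            ← conjTranspose_eq_transpose_of_trivial Uᴴ, conjTranspose_conjTranspose]
        have hmat : (Uᴴ * P)ᵀ * (V * W) = Pᴴ * M := by
          rw [h0t, Matrix.mul_assoc Pᴴ U (V * W), ← Matrix.mul_assoc U V W, ← hXUV, ← hMdef]
        have hstep : ∑ k, (Uᴴ * P) k i * (V * W) k i = (Pᴴ * M) i i := by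
          have hthis := congrFun (congrFun hmat i) i
          rw [← hthis, mul_apply]
          simp only [transpose_apply]
        rw [hstep]
        have hPM : (Pᴴ * M) i i = (Real.sqrt (lam i))⁻¹ * lam i := by
          rw [mul_apply]
          simp only [conjTranspose_apply, star_trivial]
          have e : ∑ j, P j i * M j i = (Real.sqrt (lam i))⁻¹ * ∑ j, M j i * M j i := by
            rw [Finset.mul_sum]
            exact Finset.sum_congr rfl fun j _ => by rw [hPapp]; ring
          rw [e, col_sq i]
        rw [hPM]
        by_cases h0 : lam i = 0
        · simp [h0]
        · have hl : 0 < lam i := lt_of_le_of_ne (lam_nonneg i) (Ne.symm h0)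
          have hs : Real.sqrt (lam i) ≠ 0 := by positivity
          rw [eq_comm, inv_mul_eq_div, div_eq_iff hs]
          exact (Real.mul_self_sqrt (le_of_lt hl)).symm
      rw [heq]
      exact dot_le_half _ _
    have sumA : ∑ i, ∑ k, (Uᴴ * P) k i ^ 2 ≤ ∑ i, ∑ j, U i j ^ 2 := by
      have e1 : ∑ i, ∑ k, (Uᴴ * P) k i ^ 2 = ((U * Uᴴ) * (P * Pᴴ)).trace := by
        rw [show ∑ i, ∑ k, (Uᴴ * P) k i ^ 2 = ∑ k, ∑ i, (Uᴴ * P) k i ^ 2 from Finset.sum_comm,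
          sum_sq_eq_trace, conjTranspose_mul, conjTranspose_conjTranspose]
        rw [show Pᴴ * U * (Uᴴ * P) = Pᴴ * (U * Uᴴ * P) by simp only [Matrix.mul_assoc],
          trace_mul_comm, Matrix.mul_assoc]
      have e2 : ∑ i, ∑ j, U i j ^ 2 = ((U * Uᴴ)).trace := by
        rw [sum_sq_eq_trace, trace_mul_comm]
      rw [e1, e2]
      have h3 : 0 ≤ ((U * Uᴴ) * (1 - P * Pᴴ)).trace :=
        trace_psd_mul_nonneg (posSemidef_self_mul_conjTranspose U) hproj
      rw [mul_sub, mul_one, trace_sub] at h3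
      linarith
    have sumB : ∑ i, ∑ k, (V * W) k i ^ 2 = ∑ i, ∑ j, V i j ^ 2 := by
      rw [show ∑ i, ∑ k, (V * W) k i ^ 2 = ∑ k, ∑ i, (V * W) k i ^ 2 from Finset.sum_comm,
        sum_sq_eq_trace, sum_sq_eq_trace, conjTranspose_mul,
        show Wᴴ * Vᴴ * (V * W) = Wᴴ * (Vᴴ * V * W) by simp only [Matrix.mul_assoc],
        trace_mul_comm, Matrix.mul_assoc, hW2, mul_one]
    have hsum := Finset.sum_le_sum (fun i (_ : i ∈ Finset.univ) => hsig i)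
    rw [nuc, frobNorm_sq, frobNorm_sq]
    have expand : ∑ i : Fin n, ((∑ k, (Uᴴ * P) k i ^ 2) / 2 + (∑ k, (V * W) k i ^ 2) / 2)
        = (∑ i, ∑ k, (Uᴴ * P) k i ^ 2) / 2 + (∑ i, ∑ k, (V * W) k i ^ 2) / 2 := by
      rw [Finset.sum_add_distrib, ← Finset.sum_div, ← Finset.sum_div]
    rw [expand] at hsum
    linarith
end

section
/- Let W₁ ∈ ℝ^{m×m}, W₂ ∈ ℝ^{n×n}, X ∈ ℝ^{m×n} be such that the block matrix [W₁, X; Xᵀ, W₂] is positive semidefinite. Then (1/2)(tr(W₁) + tr(W₂)) ≥ ‖X‖_*. -/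
open Matrix

lemma psd_trace_nonneg {k : ℕ} {M : Matrix (Fin k) (Fin k) ℝ} (hM : M.PosSemidef) :
    0 ≤ M.trace := by
  refine Finset.sum_nonneg fun i _ => ?_
  simpa [Matrix.mulVec_single, dotProduct, Pi.single_apply] using hM.dotProduct_mulVec_nonneg (Pi.single i 1)

lemma psd_trace_mul_proj_le {k : ℕ} {W P : Matrix (Fin k) (Fin k) ℝ}
    (hW : W.PosSemidef) (hP : Pᴴ = P) (hP2 : P * P = P) :
    (W * P).trace ≤ W.trace := by
  have h1 : ((1 - P) * W * (1 - P)).PosSemidef := by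
    have := hW.mul_mul_conjTranspose_same (1 - P)
    rwa [conjTranspose_sub, conjTranspose_one, hP] at this
  have h2 : 0 ≤ ((1 - P) * W * (1 - P)).trace := psd_trace_nonneg h1
  have hQ : (1 - P) * (1 - P) = 1 - P := by
    rw [sub_mul, one_mul, mul_sub, mul_one, hP2]
    abel
  have h3 : ((1 - P) * W * (1 - P)).trace = W.trace - (W * P).trace := by
    rw [Matrix.trace_mul_comm, ← mul_assoc, hQ, Matrix.trace_mul_comm,
      mul_sub, mul_one, trace_sub]
  linarith

theorem trace_ge_nuclearNorm_of_block_posSemidef {m n : ℕ}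
    (W₁ : Matrix (Fin m) (Fin m) ℝ) (W₂ : Matrix (Fin n) (Fin n) ℝ)
    (X : Matrix (Fin m) (Fin n) ℝ)
    (h : (Matrix.fromBlocks W₁ X Xᵀ W₂).PosSemidef) :
    (1 / 2) * (W₁.trace + W₂.trace) ≥ nuclearNorm X := by
  classical
  set lam : Fin n → ℝ := (Matrix.isHermitian_conjTranspose_mul_self X).eigenvalues with hlamdef
  set v : Fin n → (Fin n → ℝ) :=
    fun i => ⇑((Matrix.isHermitian_conjTranspose_mul_self X).eigenvectorBasis i) with hvdef
  have hlam0 : ∀ i, 0 ≤ lam i := fun i =>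
    Matrix.eigenvalues_conjTranspose_mul_self_nonneg X i
  have hXXv : ∀ i, (Xᵀ * X) *ᵥ v i = lam i • v i := fun i =>
    (Matrix.isHermitian_conjTranspose_mul_self X).mulVec_eigenvectorBasis i
  have hvv : ∀ i j, v i ⬝ᵥ v j = if i = j then 1 else 0 := by
    intro i j
    have h0 := orthonormal_iff_ite.mp
      (Matrix.isHermitian_conjTranspose_mul_self X).eigenvectorBasis.orthonormal i j
    rw [EuclideanSpace.inner_eq_star_dotProduct] at h0
    rw [dotProduct_comm]
    simp at h0
    exact h0
  have hXvXv : ∀ i j, (X *ᵥ v i) ⬝ᵥ (X *ᵥ v j) = if i = j then lam i else 0 := by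
    intro i j
    have h1 : v i ⬝ᵥ ((Xᵀ * X) *ᵥ v j) = (X *ᵥ v i) ⬝ᵥ (X *ᵥ v j) := by
      rw [← Matrix.mulVec_mulVec, Matrix.dotProduct_mulVec, Matrix.vecMul_transpose]
    rw [← h1, hXXv j, dotProduct_smul, hvv i j, smul_eq_mul]
    by_cases hij : i = j
    · subst hij; simp
    · simp [hij]
  set u : Fin n → (Fin m → ℝ) := fun i => (Real.sqrt (lam i))⁻¹ • (X *ᵥ v i) with hudef
  have hsq : ∀ i, Real.sqrt (lam i) * Real.sqrt (lam i) = lam i := fun i =>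
    Real.mul_self_sqrt (hlam0 i)
  have hu0 : ∀ i, lam i = 0 → u i = 0 := by
    intro i h0
    simp [hudef, h0]
  have huXv : ∀ i, u i ⬝ᵥ (X *ᵥ v i) = Real.sqrt (lam i) := by
    intro i
    rw [hudef]
    simp only [smul_dotProduct, hXvXv i i, if_pos rfl, ↓reduceIte, smul_eq_mul]
    rcases eq_or_lt_of_le (hlam0 i) with h0 | h0
    · rw [← h0]; simp
    · have hs : Real.sqrt (lam i) ≠ 0 := ne_of_gt (Real.sqrt_pos.mpr h0)
      field_simp
      rw [Real.sq_sqrt (hlam0 i)]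
  have huu : ∀ i j, u i ⬝ᵥ u j = if i = j then (if lam i = 0 then 0 else 1) else 0 := by
    intro i j
    rw [hudef]
    simp only [smul_dotProduct, dotProduct_smul, hXvXv i j, smul_eq_mul]
    by_cases hij : i = j
    · subst hij
      simp only [if_pos rfl, ↓reduceIte]
      rcases eq_or_lt_of_le (hlam0 i) with h0 | h0
      · rw [← h0]; simp
      · have hs : Real.sqrt (lam i) ≠ 0 := ne_of_gt (Real.sqrt_pos.mpr h0)
        rw [if_neg (ne_of_gt h0)]
        field_simp
        rw [Real.sq_sqrt (hlam0 i)]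
    · simp [hij]
  -- quadratic form inequality
  have hquad : ∀ (x : Fin m → ℝ) (y : Fin n → ℝ),
      2 * (x ⬝ᵥ (X *ᵥ y)) ≤ x ⬝ᵥ (W₁ *ᵥ x) + y ⬝ᵥ (W₂ *ᵥ y) := by
    intro x y
    have h0 := h.dotProduct_mulVec_nonneg (Sum.elim x (-y))
    rw [show star (Sum.elim x (-y)) = Sum.elim x (-y) from star_trivial _] at h0
    rw [Matrix.fromBlocks_mulVec] at h0
    simp only [Sum.elim_comp_inl, Sum.elim_comp_inr] at h0
    have hsplit : Sum.elim x (-y) ⬝ᵥ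
        Sum.elim (W₁ *ᵥ x + X *ᵥ (-y)) (Xᵀ *ᵥ x + W₂ *ᵥ (-y))
        = x ⬝ᵥ (W₁ *ᵥ x + X *ᵥ (-y)) + (-y) ⬝ᵥ (Xᵀ *ᵥ x + W₂ *ᵥ (-y)) := by
      simp [dotProduct, Fintype.sum_sum_type]
    rw [hsplit] at h0
    have hcomm : y ⬝ᵥ (Xᵀ *ᵥ x) = x ⬝ᵥ (X *ᵥ y) := by
      rw [Matrix.dotProduct_mulVec, Matrix.vecMul_transpose, dotProduct_comm]
    simp only [Matrix.mulVec_neg, dotProduct_add, dotProduct_neg,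
      neg_dotProduct, neg_neg] at h0
    linarith [h0, hcomm]
  have hkey : ∀ i, 2 * Real.sqrt (lam i) ≤ u i ⬝ᵥ (W₁ *ᵥ u i) + v i ⬝ᵥ (W₂ *ᵥ v i) := by
    intro i
    have := hquad (u i) (v i)
    rwa [huXv i] at this
  have hsum : 2 * nuclearNorm X ≤
      (∑ i, u i ⬝ᵥ (W₁ *ᵥ u i)) + ∑ i, v i ⬝ᵥ (W₂ *ᵥ v i) := by
    rw [nuclearNorm, Finset.mul_sum, ← Finset.sum_add_distrib]
    exact Finset.sum_le_sum fun i _ => hkey i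
  -- matrix forms
  set V : Matrix (Fin n) (Fin n) ℝ := Matrix.of (fun j i => v i j) with hVdef
  set U : Matrix (Fin m) (Fin n) ℝ := Matrix.of (fun j i => u i j) with hUdef
  have hVV : Vᵀ * V = 1 := by
    ext i j
    simpa [hVdef, Matrix.mul_apply, Matrix.one_apply, dotProduct] using hvv i j
  have hVVt : V * Vᵀ = 1 := mul_eq_one_comm.mp hVV
  have hW2trace : ∑ i, v i ⬝ᵥ (W₂ *ᵥ v i) = W₂.trace := by
    have h1 : ∑ i, v i ⬝ᵥ (W₂ *ᵥ v i) = (Vᵀ * (W₂ * V)).trace := by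
      simp [Matrix.trace, Matrix.diag, Matrix.mul_apply, Matrix.mulVec, dotProduct,
        hVdef, Finset.mul_sum]
    rw [h1, Matrix.trace_mul_comm, Matrix.mul_assoc, hVVt, Matrix.mul_one]
  have hUU : Uᵀ * U = Matrix.diagonal (fun i => if lam i = 0 then 0 else 1) := by
    ext i j
    by_cases hij : i = j
    · subst hij
      simpa [hUdef, Matrix.mul_apply, dotProduct, Matrix.diagonal] using huu i i
    · simpa [hUdef, Matrix.mul_apply, dotProduct, Matrix.diagonal, hij]
        using huu i j
  have hUP : U * (Uᵀ * U) = U := by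
    rw [hUU]
    ext j i
    rw [Matrix.mul_diagonal]
    by_cases h0 : lam i = 0
    · have := hu0 i h0
      simp [hUdef, h0, this]
    · simp [h0]
  have hPsymm : (U * Uᵀ)ᴴ = U * Uᵀ := by
    ext i j
    simp [Matrix.conjTranspose_apply, Matrix.mul_apply, mul_comm]
  have hPidem : (U * Uᵀ) * (U * Uᵀ) = U * Uᵀ := by
    calc (U * Uᵀ) * (U * Uᵀ) = (U * (Uᵀ * U)) * Uᵀ := by
          rw [Matrix.mul_assoc U Uᵀ (U * Uᵀ), ← Matrix.mul_assoc Uᵀ U Uᵀ, ← Matrix.mul_assoc]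
      _ = U * Uᵀ := by rw [hUP]
  have hW1 : W₁.PosSemidef := by
    have hsub := h.submatrix (Sum.inl : Fin m → Fin m ⊕ Fin n)
    have : (Matrix.fromBlocks W₁ X Xᵀ W₂).submatrix Sum.inl Sum.inl = W₁ := by
      ext i j; simp
    rwa [this] at hsub
  have hW1trace : ∑ i, u i ⬝ᵥ (W₁ *ᵥ u i) ≤ W₁.trace := by
    have h1 : ∑ i, u i ⬝ᵥ (W₁ *ᵥ u i) = (Uᵀ * (W₁ * U)).trace := by
      simp [Matrix.trace, Matrix.diag, Matrix.mul_apply, Matrix.mulVec, dotProduct,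
        hUdef, Finset.mul_sum]
    have h2 : (Uᵀ * (W₁ * U)).trace = (W₁ * (U * Uᵀ)).trace := by
      rw [Matrix.trace_mul_comm, Matrix.mul_assoc]
    rw [h1, h2]
    exact psd_trace_mul_proj_le hW1 hPsymm hPidem
  have := hW2trace
  linarith [hsum, hW1trace, hW2trace]
end

section
/- For any X ∈ ℝ^{m×n} with singular value decomposition X = UΣVᵀ, setting W₁ = UΣUᵀ and W₂ = VΣVᵀ gives a positive semidefinite block matrix [W₁, X; Xᵀ, W₂] with (1/2)(tr(W₁) + tr(W₂)) = ‖X‖_*. Hence the minimum of (1/2)(tr(W₁)+tr(W₂)) over all W₁, W₂ making the block matrix PSD equals ‖X‖_*. -/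
open Matrix

lemma psd_trace_nonneg' {k : Type*} [Fintype k] [DecidableEq k]
    {A : Matrix k k ℝ} (hA : A.PosSemidef) : 0 ≤ A.trace := by
  rw [Matrix.trace]
  refine Finset.sum_nonneg fun i _ => ?_
  have := (Matrix.posSemidef_iff_dotProduct_mulVec.mp hA).2 (Pi.single i 1)
  simpa [Matrix.mulVec_single, dotProduct, Pi.single_apply] using this

open scoped MatrixOrder in
lemma psd_trace_sqrt' {k : Type*} [Fintype k] [DecidableEq k]
    {A : Matrix k k ℝ} (hA : A.PosSemidef) :
    (CFC.sqrt A).trace = ∑ i, Real.sqrt (hA.1.eigenvalues i) := by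
  rw [CFC.sqrt_eq_cfc, cfc_nnreal_eq_real _ A, hA.1.cfc_eq]
  simp only [Matrix.IsHermitian.cfc, Unitary.conjStarAlgAut_apply]
  rw [Matrix.trace_mul_comm, ← Matrix.mul_assoc,
    Unitary.coe_star_mul_self, Matrix.one_mul, Matrix.trace_diagonal]
  simp [hA.eigenvalues_nonneg]

lemma trace_compress_le' {k r : ℕ} (A : Matrix (Fin k) (Fin r) ℝ) (hA : Aᵀ * A = 1)
    {W : Matrix (Fin k) (Fin k) ℝ} (hW : W.PosSemidef) :
    (Aᵀ * W * A).trace ≤ W.trace := by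
  set P := (1 : Matrix (Fin k) (Fin k) ℝ) - A * Aᵀ with hP
  have hAA : A * Aᵀ * (A * Aᵀ) = A * Aᵀ := by
    rw [Matrix.mul_assoc, ← Matrix.mul_assoc Aᵀ, hA, Matrix.one_mul]
  have hPP : P * P = P := by
    rw [hP, Matrix.sub_mul, Matrix.mul_sub, Matrix.mul_sub, Matrix.one_mul,
      Matrix.mul_one, hAA]
    simp
  have hPT : Pᵀ = P := by
    rw [hP]
    simp [Matrix.transpose_sub, Matrix.transpose_mul]
  have hpsd : (P * W * P).PosSemidef := by
    have := hW.mul_mul_conjTranspose_same P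
    rwa [Matrix.conjTranspose_eq_transpose_of_trivial, hPT] at this
  have h1 : 0 ≤ (P * W * P).trace := psd_trace_nonneg' hpsd
  have h2 : (P * W * P).trace = W.trace - (Aᵀ * W * A).trace := by
    rw [Matrix.trace_mul_cycle, hPP, hP, Matrix.sub_mul, Matrix.one_mul,
      Matrix.trace_sub, Matrix.trace_mul_cycle Aᵀ W A]
  linarith

theorem svd_block_attains_nuclearNorm {m n r : ℕ}
    (X : Matrix (Fin m) (Fin n) ℝ)
    (U : Matrix (Fin m) (Fin r) ℝ) (V : Matrix (Fin n) (Fin r) ℝ) (σ : Fin r → ℝ)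
    (hσ : ∀ i, 0 ≤ σ i) (hU : Uᵀ * U = 1) (hV : Vᵀ * V = 1)
    (hX : X = U * Matrix.diagonal σ * Vᵀ) :
    (Matrix.fromBlocks (U * Matrix.diagonal σ * Uᵀ) X Xᵀ (V * Matrix.diagonal σ * Vᵀ)).PosSemidef ∧
    (1 / 2) * ((U * Matrix.diagonal σ * Uᵀ).trace + (V * Matrix.diagonal σ * Vᵀ).trace)
      = nuclearNorm X ∧
    IsLeast {c : ℝ | ∃ (W₁ : Matrix (Fin m) (Fin m) ℝ) (W₂ : Matrix (Fin n) (Fin n) ℝ),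
        (Matrix.fromBlocks W₁ X Xᵀ W₂).PosSemidef ∧ c = (1 / 2) * (W₁.trace + W₂.trace)}
      (nuclearNorm X) := by
  set D := Matrix.diagonal σ with hD
  have hDpsd : D.PosSemidef := by
    rw [hD, Matrix.posSemidef_diagonal_iff]
    exact hσ
  have hDh : Dᵀ = D := Matrix.diagonal_transpose σ
  have hXT : Xᵀ = V * D * Uᵀ := by
    rw [hX]; simp [Matrix.transpose_mul, hDh, Matrix.mul_assoc]
  have hblock : (Matrix.fromBlocks (U * D * Uᵀ) X Xᵀ (V * D * Vᵀ)).PosSemidef := by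
    have h := hDpsd.mul_mul_conjTranspose_same (Matrix.fromRows U V)
    rw [Matrix.conjTranspose_eq_transpose_of_trivial, Matrix.transpose_fromRows,
      Matrix.fromRows_mul, Matrix.fromRows_mul_fromCols] at h
    rw [hXT, hX]
    exact h
  have htrU : (U * D * Uᵀ).trace = ∑ i, σ i := by
    rw [Matrix.trace_mul_cycle, hU, Matrix.one_mul, hD, Matrix.trace_diagonal]
  have htrV : (V * D * Vᵀ).trace = ∑ i, σ i := by
    rw [Matrix.trace_mul_cycle, hV, Matrix.one_mul, hD, Matrix.trace_diagonal]
  -- nuclear norm equals sum of singular values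
  have hApsd : (Xᵀ * X).PosSemidef := by
    have := Matrix.posSemidef_conjTranspose_mul_self X
    rwa [Matrix.conjTranspose_eq_transpose_of_trivial] at this
  have hVDVpsd : (V * D * Vᵀ).PosSemidef := by
    have := hDpsd.mul_mul_conjTranspose_same V
    rwa [Matrix.conjTranspose_eq_transpose_of_trivial] at this
  have hsq : (V * D * Vᵀ) ^ 2 = Xᵀ * X := by
    rw [pow_two, hXT, hX]
    simp only [Matrix.mul_assoc]
    rw [← Matrix.mul_assoc Vᵀ V, hV, Matrix.one_mul, ← Matrix.mul_assoc Uᵀ U, hU,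
      Matrix.one_mul]
  open scoped MatrixOrder in
  have hsqrt : (V * D * Vᵀ) = CFC.sqrt (Xᵀ * X) :=
    (CFC.sqrt_unique (by rw [← pow_two]; exact hsq) hVDVpsd.nonneg).symm
  open scoped MatrixOrder in
  have hnn : nuclearNorm X = ∑ i, σ i := by
    have h1 : nuclearNorm X = (CFC.sqrt (Xᵀ * X)).trace := by
      rw [psd_trace_sqrt' hApsd]
      rfl
    rw [h1, ← hsqrt, htrV]
  refine ⟨hblock, by rw [htrU, htrV, hnn]; ring, ?_, ?_⟩
  · exact ⟨U * D * Uᵀ, V * D * Vᵀ, hblock, by rw [htrU, htrV, hnn]; ring⟩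
  · rintro c ⟨W₁, W₂, hM, rfl⟩
    have hW₁ : W₁.PosSemidef := by
      have h := hM.submatrix Sum.inl
      have e : (Matrix.fromBlocks W₁ X Xᵀ W₂).submatrix (Sum.inl : Fin m → Fin m ⊕ Fin n)
          Sum.inl = W₁ := by
        ext i j; rfl
      rwa [e] at h
    have hW₂ : W₂.PosSemidef := by
      have h := hM.submatrix Sum.inr
      have e : (Matrix.fromBlocks W₁ X Xᵀ W₂).submatrix (Sum.inr : Fin n → Fin m ⊕ Fin n)
          Sum.inr = W₂ := by
        ext i j; rfl
      rwa [e] at h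
    have e1 : Uᵀ * X * V = D := by
      rw [hX]
      simp only [Matrix.mul_assoc]
      rw [hV, Matrix.mul_one, ← Matrix.mul_assoc, hU, Matrix.one_mul]
    have e2 : Vᵀ * Xᵀ * U = D := by
      rw [hXT]
      simp only [Matrix.mul_assoc]
      rw [hU, Matrix.mul_one, ← Matrix.mul_assoc, hV, Matrix.one_mul]
    set N := Matrix.fromRows U (-V) with hN
    have hNpsd : (Nᵀ * (Matrix.fromBlocks W₁ X Xᵀ W₂) * N).PosSemidef := by
      have := hM.conjTranspose_mul_mul_same N
      rwa [Matrix.conjTranspose_eq_transpose_of_trivial] at this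
    have htr0 : 0 ≤ (Nᵀ * (Matrix.fromBlocks W₁ X Xᵀ W₂) * N).trace :=
      psd_trace_nonneg' hNpsd
    have hexp : (Nᵀ * (Matrix.fromBlocks W₁ X Xᵀ W₂) * N).trace
        = (Uᵀ * W₁ * U).trace + (Vᵀ * W₂ * V).trace - 2 * ∑ i, σ i := by
      rw [hN, Matrix.transpose_fromRows, Matrix.transpose_neg,
        Matrix.fromCols_mul_fromBlocks, Matrix.fromCols_mul_fromRows]
      simp only [Matrix.add_mul, Matrix.neg_mul, Matrix.mul_neg, neg_neg,
        Matrix.trace_add, Matrix.trace_neg]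
      rw [e1, e2, hD, Matrix.trace_diagonal]
      ring
    have hc1 : (Uᵀ * W₁ * U).trace ≤ W₁.trace := trace_compress_le' U hU hW₁
    have hc2 : (Vᵀ * W₂ * V).trace ≤ W₂.trace := trace_compress_le' V hV hW₂
    rw [hnn]
    linarith [htr0, hexp]
end

section
/- Let 𝓑 : ℝ^{m×n} → ℝ^L be linear, d ∈ ℝ^L, μ > 0, and let (Ū, V̄) with Ū ∈ ℝ^{m×r}, V̄ ∈ ℝ^{r×n} be a stationary point of f(U,V) = (1/2)(‖U‖_F² + ‖V‖_F²) + (μ/2)‖𝓑(UV) − d‖₂². If ‖μ 𝓑*(𝓑(ŪV̄) − d)‖₂ ≤ 1 (spectral norm), then X̄ = ŪV̄ is a global minimizer of F(X) = ‖X‖_* + (μ/2)‖𝓑(X) − d‖₂² over X ∈ ℝ^{m×n}. -/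
open Matrix

/-! ### Auxiliary lemmas -/

open scoped MatrixOrder

lemma trace_sqrt {n : ℕ} {A : Matrix (Fin n) (Fin n) ℝ} (hA : PosSemidef A) :
    (CFC.sqrt A).trace = ∑ i, Real.sqrt (hA.1.eigenvalues i) := by
  rw [CFC.sqrt_eq_cfc, cfc_nnreal_eq_real _ A, hA.1.cfc_eq, IsHermitian.cfc,
    Unitary.conjStarAlgAut_apply, Matrix.trace_mul_cycle]
  rw [show ((star hA.1.eigenvectorUnitary : Matrix (Fin n) (Fin n) ℝ)) *
      (hA.1.eigenvectorUnitary : Matrix (Fin n) (Fin n) ℝ) = 1 from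
    Unitary.coe_star_mul_self hA.1.eigenvectorUnitary]
  rw [one_mul, Matrix.trace_diagonal]
  simp [RCLike.ofReal_real_eq_id, Real.coe_toNNReal', max_eq_left (hA.eigenvalues_nonneg _)]

lemma contraction {m n : ℕ} {G : Matrix (Fin m) (Fin n) ℝ} (hG : specNorm G ≤ 1)
    (v : Fin n → ℝ) : v ⬝ᵥ ((Gᵀ * G) *ᵥ v) ≤ v ⬝ᵥ v := by
  have hH : IsHermitian (Gᵀ * G) := Matrix.isHermitian_conjTranspose_mul_self G
  have hPsd : PosSemidef (Gᵀ * G) := by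
    rw [← conjTranspose_eq_transpose_of_trivial]
    exact posSemidef_conjTranspose_mul_self _
  have heig : ∀ i, hH.eigenvalues i ≤ 1 := by
    intro i
    have h0 : (0:ℝ) ≤ hH.eigenvalues i := hPsd.eigenvalues_nonneg i
    have h1 : Real.sqrt (hH.eigenvalues i) ≤ 1 := by
      refine le_trans ?_ hG
      exact le_ciSup (f := fun j => Real.sqrt (hH.eigenvalues j))
        (Set.Finite.bddAbove (Set.finite_range _)) i
    calc hH.eigenvalues i = (Real.sqrt (hH.eigenvalues i))^2 := (Real.sq_sqrt h0).symm
      _ ≤ 1^2 := by nlinarith [Real.sqrt_nonneg (hH.eigenvalues i)]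
      _ = 1 := one_pow 2
  have hpsd1 : PosSemidef (1 - Gᵀ * G) := by
    have hspec := hH.spectral_theorem
    set Q : Matrix (Fin n) (Fin n) ℝ := (hH.eigenvectorUnitary : Matrix (Fin n) (Fin n) ℝ)
      with hQdef
    have hQ : Q * star Q = 1 := (Matrix.mem_unitaryGroup_iff).mp hH.eigenvectorUnitary.2
    have hd : (diagonal (fun i => 1 - hH.eigenvalues i) : Matrix (Fin n) (Fin n) ℝ) =
        1 - diagonal (RCLike.ofReal ∘ hH.eigenvalues) := by
      ext i j
      by_cases h : i = j <;>
        simp [h, Matrix.diagonal_apply, Matrix.one_apply, RCLike.ofReal_real_eq_id]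
    have h1 : Q * diagonal (fun i => 1 - hH.eigenvalues i) * star Q = 1 - Gᵀ * G := by
      calc Q * diagonal (fun i => 1 - hH.eigenvalues i) * star Q
          = Q * (1 - diagonal (RCLike.ofReal ∘ hH.eigenvalues)) * star Q := by rw [hd]
        _ = Q * star Q - Q * diagonal (RCLike.ofReal ∘ hH.eigenvalues) * star Q := by
            rw [Matrix.mul_sub, Matrix.mul_one, Matrix.sub_mul]
        _ = 1 - Gᵀ * G := by
            rw [hQ]; congr 1; exact (hspec.trans (Unitary.conjStarAlgAut_apply _ _)).symm
    rw [← h1]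
    refine PosSemidef.mul_mul_conjTranspose_same ?_ Q
    exact posSemidef_diagonal_iff.mpr fun i => by linarith [heig i]
  have hv := hpsd1.dotProduct_mulVec_nonneg v
  simp only [star_trivial, Matrix.sub_mulVec, Matrix.one_mulVec, dotProduct_sub] at hv
  linarith

lemma abs_dotProduct_le {k : ℕ} (u w : Fin k → ℝ) :
    |u ⬝ᵥ w| ≤ Real.sqrt (u ⬝ᵥ u) * Real.sqrt (w ⬝ᵥ w) := by
  have h1 := Real.sum_mul_le_sqrt_mul_sqrt Finset.univ u w
  have h2 := Real.sum_mul_le_sqrt_mul_sqrt Finset.univ (fun i => -u i) w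
  simp only [neg_mul, even_two, Even.neg_pow] at h2
  rw [Finset.sum_neg_distrib] at h2
  have e1 : u ⬝ᵥ u = ∑ i, u i ^ 2 := by simp [dotProduct, pow_two]
  have e2 : w ⬝ᵥ w = ∑ i, w i ^ 2 := by simp [dotProduct, pow_two]
  have e3 : u ⬝ᵥ w = ∑ i, u i * w i := rfl
  rw [e1, e2, e3, abs_le]
  exact ⟨by linarith, h1⟩

lemma trace_eq_sum_conj {n : ℕ} (Q : Matrix.unitaryGroup (Fin n) ℝ)
    (M : Matrix (Fin n) (Fin n) ℝ) :
    M.trace = ∑ j, (fun a => Q.1 a j) ⬝ᵥ (M *ᵥ fun b => Q.1 b j) := by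
  have h : M.trace = ((star Q.1) * M * Q.1).trace := by
    rw [Matrix.trace_mul_cycle, (Matrix.mem_unitaryGroup_iff).mp Q.2, Matrix.one_mul]
  rw [h, Matrix.trace]
  apply Finset.sum_congr rfl
  intro j _
  simp only [Matrix.diag_apply, Matrix.mul_apply, dotProduct, Matrix.mulVec,
    Matrix.star_apply, star_trivial, Matrix.conjTranspose_apply, dotProduct]
  calc ∑ x : Fin n, (∑ y : Fin n, Q.1 y j * M y x) * Q.1 x j
      = ∑ x : Fin n, ∑ y : Fin n, Q.1 y j * M y x * Q.1 x j := by
        simp [Finset.sum_mul]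
    _ = ∑ y : Fin n, ∑ x : Fin n, Q.1 y j * M y x * Q.1 x j := Finset.sum_comm
    _ = ∑ y : Fin n, Q.1 y j * ∑ x : Fin n, M y x * Q.1 x j := by
        simp [Finset.mul_sum, mul_assoc]

lemma trace_bound {m n : ℕ} (G X : Matrix (Fin m) (Fin n) ℝ) (hG : specNorm G ≤ 1) :
    |(Gᵀ * X).trace| ≤ nuclearNorm X := by
  have hH : IsHermitian (Xᵀ * X) := Matrix.isHermitian_conjTranspose_mul_self X
  set q : Fin n → (Fin n → ℝ) := fun j => ⇑(hH.eigenvectorBasis j) with hq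
  have hPsd : PosSemidef (Xᵀ * X) := by
    rw [← conjTranspose_eq_transpose_of_trivial]
    exact posSemidef_conjTranspose_mul_self _
  have hqq : ∀ j, q j ⬝ᵥ q j = 1 := by
    intro j
    have h2 := orthonormal_iff_ite.mp hH.eigenvectorBasis.orthonormal j j
    simp only [if_pos rfl] at h2
    rw [PiLp.inner_apply] at h2
    simpa [dotProduct, RCLike.inner_apply, hq, pow_two] using h2
  have hXq : ∀ j, (X *ᵥ q j) ⬝ᵥ (X *ᵥ q j) = hH.eigenvalues j := by
    intro j
    have h1 : (X *ᵥ q j) ⬝ᵥ (X *ᵥ q j) = q j ⬝ᵥ ((Xᵀ * X) *ᵥ q j) := by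
      rw [← Matrix.mulVec_mulVec, Matrix.dotProduct_mulVec (q j) Xᵀ,
        Matrix.vecMul_transpose]
    rw [h1, hH.mulVec_eigenvectorBasis j]
    rw [dotProduct_smul]
    simp [hqq j]
    exact (congrArg (hH.eigenvalues j * ·) (hqq j)).trans (mul_one _)
  have hsplit : ∀ j, q j ⬝ᵥ ((Gᵀ * X) *ᵥ q j) = (G *ᵥ q j) ⬝ᵥ (X *ᵥ q j) := by
    intro j
    rw [← Matrix.mulVec_mulVec, Matrix.dotProduct_mulVec (q j) Gᵀ,
      Matrix.vecMul_transpose]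
  have hcol : ∀ j, (fun a => (hH.eigenvectorUnitary : Matrix (Fin n) (Fin n) ℝ) a j) = q j := by
    intro j; funext a; exact hH.eigenvectorUnitary_apply a j
  have htr : (Gᵀ * X).trace = ∑ j, (G *ᵥ q j) ⬝ᵥ (X *ᵥ q j) := by
    rw [trace_eq_sum_conj hH.eigenvectorUnitary (Gᵀ * X)]
    apply Finset.sum_congr rfl
    intro j _
    rw [show (fun a => (hH.eigenvectorUnitary : Matrix (Fin n) (Fin n) ℝ) a j) = q j from hcol j,
      hsplit j]
  have hbound : ∀ j, |(G *ᵥ q j) ⬝ᵥ (X *ᵥ q j)| ≤ Real.sqrt (hH.eigenvalues j) := by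
    intro j
    have h1 := abs_dotProduct_le (G *ᵥ q j) (X *ᵥ q j)
    have h2 : (G *ᵥ q j) ⬝ᵥ (G *ᵥ q j) ≤ 1 := by
      have h3 : (G *ᵥ q j) ⬝ᵥ (G *ᵥ q j) = q j ⬝ᵥ ((Gᵀ * G) *ᵥ q j) := by
        rw [← Matrix.mulVec_mulVec, Matrix.dotProduct_mulVec (q j) Gᵀ,
          Matrix.vecMul_transpose]
      rw [h3]
      calc q j ⬝ᵥ ((Gᵀ * G) *ᵥ q j) ≤ q j ⬝ᵥ q j := contraction hG (q j)
        _ = 1 := hqq j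
    have h4 : Real.sqrt ((G *ᵥ q j) ⬝ᵥ (G *ᵥ q j)) ≤ 1 := by
      rw [show (1:ℝ) = Real.sqrt 1 from (Real.sqrt_one).symm]
      exact Real.sqrt_le_sqrt h2
    calc |(G *ᵥ q j) ⬝ᵥ (X *ᵥ q j)|
        ≤ Real.sqrt ((G *ᵥ q j) ⬝ᵥ (G *ᵥ q j)) * Real.sqrt ((X *ᵥ q j) ⬝ᵥ (X *ᵥ q j)) := h1
      _ ≤ 1 * Real.sqrt ((X *ᵥ q j) ⬝ᵥ (X *ᵥ q j)) := by
          apply mul_le_mul_of_nonneg_right h4 (Real.sqrt_nonneg _)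
      _ = Real.sqrt (hH.eigenvalues j) := by rw [one_mul, hXq j]
  calc |(Gᵀ * X).trace| = |∑ j, (G *ᵥ q j) ⬝ᵥ (X *ᵥ q j)| := by rw [htr]
    _ ≤ ∑ j, |(G *ᵥ q j) ⬝ᵥ (X *ᵥ q j)| := Finset.abs_sum_le_sum_abs _ _
    _ ≤ ∑ j, Real.sqrt (hH.eigenvalues j) := Finset.sum_le_sum fun j _ => hbound j
    _ = nuclearNorm X := rfl

theorem stationary_point_global_min {m n r L : ℕ} (μ : ℝ) (hμ : 0 < μ)
    (B : Matrix (Fin m) (Fin n) ℝ →ₗ[ℝ] (Fin L → ℝ))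
    (Bstar : (Fin L → ℝ) →ₗ[ℝ] Matrix (Fin m) (Fin n) ℝ)
    (hadj : ∀ (z : Fin L → ℝ) (A : Matrix (Fin m) (Fin n) ℝ),
      frobInner (Bstar z) A = ∑ i, z i * B A i)
    (d : Fin L → ℝ)
    (U : Matrix (Fin m) (Fin r) ℝ) (V : Matrix (Fin r) (Fin n) ℝ)
    (hU : (μ • Bstar (B (U * V) - d)) * Vᵀ + U = 0)
    (hV : (μ • Bstar (B (U * V) - d))ᵀ * U + Vᵀ = 0)
    (hspec : specNorm (μ • Bstar (B (U * V) - d)) ≤ 1) :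
    ∀ X : Matrix (Fin m) (Fin n) ℝ,
      nuclearNorm (U * V) + μ / 2 * ∑ i, (B (U * V) i - d i) ^ 2 ≤
      nuclearNorm X + μ / 2 * ∑ i, (B X i - d i) ^ 2 := by
  intro X
  set z : Fin L → ℝ := B (U * V) - d with hz
  set G : Matrix (Fin m) (Fin n) ℝ := μ • Bstar z with hGdef
  have hU' : U = -(G * Vᵀ) := eq_neg_of_add_eq_zero_right hU
  have hV' : Gᵀ * U = -Vᵀ := eq_neg_of_add_eq_zero_left hV
  have hGGV : Gᵀ * (G * Vᵀ) = Vᵀ := by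
    have h := hV'
    rw [hU', Matrix.mul_neg] at h
    exact neg_injective h
  have hUtU : Uᵀ * U = V * Vᵀ := by
    rw [hU']
    calc (-(G * Vᵀ))ᵀ * -(G * Vᵀ) = (G * Vᵀ)ᵀ * (G * Vᵀ) := by
          rw [Matrix.transpose_neg, Matrix.neg_mul, Matrix.mul_neg, neg_neg]
      _ = V * (Gᵀ * (G * Vᵀ)) := by
          rw [Matrix.transpose_mul, Matrix.transpose_transpose, Matrix.mul_assoc]
      _ = V * Vᵀ := by rw [hGGV]
  have hXX : (Vᵀ * V) ^ 2 = (U * V)ᵀ * (U * V) := by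
    calc (Vᵀ * V) ^ 2 = Vᵀ * (V * Vᵀ) * V := by
          rw [pow_two]; simp only [Matrix.mul_assoc]
      _ = Vᵀ * (Uᵀ * U) * V := by rw [hUtU]
      _ = (U * V)ᵀ * (U * V) := by
          rw [Matrix.transpose_mul]; simp only [Matrix.mul_assoc]
  have hPsdX : PosSemidef ((U * V)ᵀ * (U * V)) := by
    rw [← conjTranspose_eq_transpose_of_trivial]
    exact posSemidef_conjTranspose_mul_self _
  have hPsdV : PosSemidef (Vᵀ * V) := by
    rw [← conjTranspose_eq_transpose_of_trivial]
    exact posSemidef_conjTranspose_mul_self _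
  have hnuc : nuclearNorm (U * V) = (Vᵀ * V).trace := by
    have h1 : nuclearNorm (U * V) = (CFC.sqrt ((U * V)ᵀ * (U * V))).trace := (trace_sqrt hPsdX).symm
    have h2 : CFC.sqrt ((U * V)ᵀ * (U * V)) = Vᵀ * V :=
      (CFC.sqrt_eq_iff _ _ hPsdX.nonneg hPsdV.nonneg).mpr ((sq _).symm.trans hXX)
    rw [h1, h2]
  have htrGX : (Gᵀ * (U * V)).trace = -(Vᵀ * V).trace := by
    have h : Gᵀ * (U * V) = -(Vᵀ * V) := by
      rw [← Matrix.mul_assoc, hV', Matrix.neg_mul]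
    rw [h, Matrix.trace_neg]
  have hfrob : ∀ A : Matrix (Fin m) (Fin n) ℝ, (Gᵀ * A).trace = μ * ∑ i, z i * B A i := by
    intro A
    have h1 : Gᵀ * A = μ • ((Bstar z)ᵀ * A) := by
      rw [hGdef, Matrix.transpose_smul, Matrix.smul_mul]
    have h2 := hadj z A
    simp only [frobInner] at h2
    rw [h1, Matrix.trace_smul, h2, smul_eq_mul]
  have hb : -(nuclearNorm X) ≤ (Gᵀ * X).trace :=
    (abs_le.mp (trace_bound G X hspec)).1
  have hzi : ∀ i, z i = B (U * V) i - d i := fun i => rfl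
  have hquad : 2 * ∑ i, z i * (B X i - B (U * V) i) ≤
      (∑ i, (B X i - d i) ^ 2) - ∑ i, (B (U * V) i - d i) ^ 2 := by
    rw [← Finset.sum_sub_distrib, Finset.mul_sum]
    apply Finset.sum_le_sum
    intro i _
    rw [hzi i]
    nlinarith [sq_nonneg (B X i - B (U * V) i)]
  have hlin : (Gᵀ * X).trace - (Gᵀ * (U * V)).trace =
      μ * ∑ i, z i * (B X i - B (U * V) i) := by
    rw [hfrob X, hfrob (U * V), ← mul_sub, ← Finset.sum_sub_distrib]
    congr 1
    apply Finset.sum_congr rfl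
    intro i _
    ring
  have hS : μ * ∑ i, z i * (B X i - B (U * V) i) ≤
      μ / 2 * ((∑ i, (B X i - d i) ^ 2) - ∑ i, (B (U * V) i - d i) ^ 2) := by
    nlinarith [hquad, hμ]
  rw [hnuc]
  rw [htrGX] at hlin
  linarith [hb, hS, hlin]
end
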